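/- Given data points y₁,…,y_m and positive weights wⱼ, the function ℓ(v) = Σ_{j=1}^m wⱼ · v^{−1/(2(1+β))} · (1 − yⱼ²/(3v)) of v > 0 (with β > −1) is increasing for v ≤ v* and decreasing for v ≥ v*, where v* = ((3+2β)/3)·(Σⱼ wⱼ yⱼ²)/(Σⱼ wⱼ). Hence on a closed subinterval [L,U] ⊂ (0,∞), ℓ is maximized at the median of {L, U, v*}. -/

import Mathlib

/-- The scale likelihood ℓ(v) = Σ wⱼ v^(−1/(2(1+β)))(1 − yⱼ²/(3v)) increases up to
v*, decreases after it, and on a closed subinterval of (0,∞) is maximized at the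
median of {L, U, v*}. -/
theorem weighted_scale_max {m : ℕ} (hm : 0 < m) (y w : Fin m → ℝ)
    (hy : ∃ j, y j ≠ 0) (hw : ∀ j, 0 < w j) (β : ℝ) (hβ : -1 < β) :
    let ℓ : ℝ → ℝ := fun v =>
      ∑ j, w j * v ^ (-(1 / (2 * (1 + β)))) * (1 - (y j) ^ 2 / (3 * v))
    let vstar : ℝ := ((3 + 2 * β) / 3) * (∑ j, w j * (y j) ^ 2) / (∑ j, w j)
    MonotoneOn ℓ (Set.Ioc 0 vstar) ∧ AntitoneOn ℓ (Set.Ici vstar) ∧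
    ∀ L U : ℝ, 0 < L → L ≤ U → ∀ x ∈ Set.Icc L U,
      ℓ x ≤ ℓ (if vstar ≤ L then L else if U ≤ vstar then U else vstar) := by
  intro ℓ vstar
  have h1β : (0:ℝ) < 1 + β := by linarith
  set α : ℝ := 1 / (2 * (1 + β)) with hα_def
  have hα : 0 < α := by positivity
  set A : ℝ := ∑ j, w j with hA_def
  set S : ℝ := ∑ j, w j * (y j) ^ 2 with hS_def
  have hA : 0 < A := Finset.sum_pos (fun j _ => hw j) ⟨⟨0, hm⟩, Finset.mem_univ _⟩
  have hS : 0 < S := by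
    obtain ⟨j0, hj0⟩ := hy
    refine Finset.sum_pos' (fun j _ => mul_nonneg (hw j).le (sq_nonneg _)) ⟨j0, Finset.mem_univ _, ?_⟩
    exact mul_pos (hw j0) (pow_two_pos_of_ne_zero hj0)
  set C : ℝ := S / 3 with hC_def
  have hC : 0 < C := by positivity
  have hv0 : 0 < vstar := by
    have : vstar = ((3 + 2 * β) / 3) * S / A := rfl
    rw [this]
    have h32 : (0:ℝ) < 3 + 2 * β := by linarith
    positivity
  have hkey : A * α * vstar = C * (α + 1) := by
    have : vstar = ((3 + 2 * β) / 3) * S / A := rfl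
    rw [this, hα_def, hC_def]
    field_simp
    ring
  set f : ℝ → ℝ := fun v => A * v ^ (-α) - C * v ^ (-α - 1) with hf_def
  have hEq : ∀ v : ℝ, 0 < v → ℓ v = f v := by
    intro v hv
    have hp : v ^ (-α - 1) = v ^ (-α) / v := Real.rpow_sub_one hv.ne' _
    calc ℓ v = ∑ j, (w j * v ^ (-α) - (w j * (y j) ^ 2) * (v ^ (-α) / (3 * v))) := by
          refine Finset.sum_congr rfl fun j _ => ?_
          have h3v : (3 : ℝ) * v ≠ 0 := by positivity
          field_simp
          try ring
      _ = A * v ^ (-α) - S * (v ^ (-α) / (3 * v)) := by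
          rw [Finset.sum_sub_distrib, ← Finset.sum_mul, ← Finset.sum_mul]
      _ = f v := by
          rw [hf_def]
          simp only [hp, hC_def]
          field_simp
          try ring
  have hderiv : ∀ v : ℝ, 0 < v →
      HasDerivAt f (v ^ (-α - 2) * (C * (α + 1) - A * α * v)) v := by
    intro v hv
    have h1 : HasDerivAt (fun v : ℝ => v ^ (-α)) ((-α) * v ^ (-α - 1)) v :=
      Real.hasDerivAt_rpow_const (Or.inl hv.ne')
    have h2 : HasDerivAt (fun v : ℝ => v ^ (-α - 1)) ((-α - 1) * v ^ (-α - 1 - 1)) v :=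
      Real.hasDerivAt_rpow_const (Or.inl hv.ne')
    have h := (h1.const_mul A).sub (h2.const_mul C)
    refine h.congr_deriv ?_
    have e1 : v ^ (-α - 1) = v ^ (-α - 2) * v := by
      rw [← Real.rpow_add_one hv.ne' (-α - 2)]; ring_nf
    have e2 : v ^ (-α - 1 - 1) = v ^ (-α - 2) := by ring_nf
    rw [e1, e2]
    ring
  have hMono : MonotoneOn ℓ (Set.Ioc 0 vstar) := by
    have hf : StrictMonoOn f (Set.Ioc 0 vstar) := by
      apply strictMonoOn_of_deriv_pos (convex_Ioc 0 vstar)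
      · intro x hx
        exact (hderiv x hx.1).continuousAt.continuousWithinAt
      · rw [interior_Ioc]
        intro x hx
        rw [(hderiv x hx.1).deriv]
        have h1 : 0 < x ^ (-α - 2) := Real.rpow_pos_of_pos hx.1 _
        have h2 : 0 < C * (α + 1) - A * α * x := by
          rw [← hkey]
          have : A * α * x < A * α * vstar := by
            apply mul_lt_mul_of_pos_left hx.2
            positivity
          linarith
        positivity
    intro a ha b hb hab
    rw [hEq a ha.1, hEq b hb.1]
    exact hf.monotoneOn ha hb hab
  have hAnti : AntitoneOn ℓ (Set.Ici vstar) := by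
    have hf : StrictAntiOn f (Set.Ici vstar) := by
      apply strictAntiOn_of_deriv_neg (convex_Ici vstar)
      · intro x hx
        exact (hderiv x (lt_of_lt_of_le hv0 hx)).continuousAt.continuousWithinAt
      · rw [interior_Ici]
        intro x hx
        have hx0 : 0 < x := lt_trans hv0 hx
        rw [(hderiv x hx0).deriv]
        have h1 : 0 < x ^ (-α - 2) := Real.rpow_pos_of_pos hx0 _
        have h2 : C * (α + 1) - A * α * x < 0 := by
          rw [← hkey]
          have : A * α * vstar < A * α * x := by
            apply mul_lt_mul_of_pos_left hx
            positivity
          linarith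
        exact mul_neg_of_pos_of_neg h1 h2
    intro a ha b hb hab
    rw [hEq a (lt_of_lt_of_le hv0 ha), hEq b (lt_of_lt_of_le hv0 hb)]
    exact (hf.antitoneOn) ha hb hab
  refine ⟨hMono, hAnti, ?_⟩
  intro L U hL hLU x hx
  by_cases hvL : vstar ≤ L
  · rw [if_pos hvL]
    exact hAnti hvL (le_trans hvL hx.1) hx.1
  · rw [if_neg hvL]
    by_cases hUv : U ≤ vstar
    · rw [if_pos hUv]
      exact hMono ⟨lt_of_lt_of_le hL hx.1, le_trans hx.2 hUv⟩
        ⟨lt_of_lt_of_le hL hLU, hUv⟩ hx.2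
    · rw [if_neg hUv]
      by_cases hxv : x ≤ vstar
      · exact hMono ⟨lt_of_lt_of_le hL hx.1, hxv⟩ ⟨hv0, le_refl _⟩ hxv
      · exact hAnti (le_refl vstar : vstar ∈ Set.Ici vstar) (le_of_not_ge hxv) (le_of_not_ge hxv)
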